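/- Let G be a connected finite simple graph with im(G) = t that is not isomorphic to K_t. Then for every n ≥ 5, im(G□P_n) ≥ t + 2. -/

import Mathlib

set_option linter.unusedVariables false

open SimpleGraph

/-- A graph `G` has a `K_t`-immersion: `t` terminal vertices (injective `φ`) together with
pairwise edge-disjoint paths joining every pair of terminals. -/
def HasCliqueImmersion {V : Type*} (G : SimpleGraph V) (t : ℕ) : Prop :=
  ∃ φ : Fin t → V, Function.Injective φ ∧
    ∃ P : ∀ i j : Fin t, G.Walk (φ i) (φ j),
      (∀ i j : Fin t, i < j → (P i j).IsPath) ∧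
      (∀ i j k l : Fin t, i < j → k < l → (i, j) ≠ (k, l) →
        List.Disjoint (P i j).edges (P k l).edges)

/-- The immersion number of `G`: the largest `t` such that `G` has a `K_t`-immersion. -/
noncomputable def immersionNumber {V : Type*} (G : SimpleGraph V) : ℕ :=
  sSup {t | HasCliqueImmersion G t}

/-- Lexicographic product. -/
def lexProd {α β : Type*} (G : SimpleGraph α) (H : SimpleGraph β) :
    SimpleGraph (α × β) where
  Adj x y := G.Adj x.1 y.1 ∨ (x.1 = y.1 ∧ H.Adj x.2 y.2)
  symm := by constructor; rintro x y (h | ⟨h1, h2⟩); exact Or.inl h.symm; exact Or.inr ⟨h1.symm, h2.symm⟩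
  loopless := by constructor; rintro x (h | ⟨-, h⟩) <;> exact h.ne rfl

/-- Direct (tensor) product. -/
def directProd {α β : Type*} (G : SimpleGraph α) (H : SimpleGraph β) :
    SimpleGraph (α × β) where
  Adj x y := G.Adj x.1 y.1 ∧ H.Adj x.2 y.2
  symm := by constructor; rintro x y ⟨h1, h2⟩; exact ⟨h1.symm, h2.symm⟩
  loopless := by constructor; rintro x ⟨h, -⟩; exact h.ne rfl

/-- Strong product. -/
def strongProd {α β : Type*} (G : SimpleGraph α) (H : SimpleGraph β) :
    SimpleGraph (α × β) :=
  (G.boxProd H) ⊔ (directProd G H)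

/-- Cartesian power: `d`-fold Cartesian (box) product of `G` with itself. -/
def boxPow {α : Type*} (G : SimpleGraph α) (d : ℕ) : SimpleGraph (Fin d → α) where
  Adj x y := ∃ i, G.Adj (x i) (y i) ∧ ∀ j, j ≠ i → x j = y j
  symm := by constructor; rintro x y ⟨i, h, hj⟩; exact ⟨i, h.symm, fun j hji => (hj j hji).symm⟩
  loopless := by constructor; rintro x ⟨i, h, -⟩; exact h.ne rfl

instance {α β : Type*} [DecidableEq α] (G : SimpleGraph α) (H : SimpleGraph β)
    [DecidableRel G.Adj] [DecidableRel H.Adj] : DecidableRel (lexProd G H).Adj :=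
  fun x y => inferInstanceAs (Decidable (_ ∨ _))

instance {α β : Type*} (G : SimpleGraph α) (H : SimpleGraph β)
    [DecidableRel G.Adj] [DecidableRel H.Adj] : DecidableRel (directProd G H).Adj :=
  fun x y => inferInstanceAs (Decidable (_ ∧ _))

instance {α β : Type*} [DecidableEq α] [DecidableEq β] (G : SimpleGraph α) (H : SimpleGraph β)
    [DecidableRel G.Adj] [DecidableRel H.Adj] : DecidableRel (G.boxProd H).Adj :=
  fun x y => decidable_of_iff _ (SimpleGraph.boxProd_adj).symm

instance {α β : Type*} [DecidableEq α] [DecidableEq β] (G : SimpleGraph α) (H : SimpleGraph β)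
    [DecidableRel G.Adj] [DecidableRel H.Adj] : DecidableRel (strongProd G H).Adj :=
  fun x y => inferInstanceAs (Decidable (_ ∨ _))

namespace ImmersionAux

open SimpleGraph Walk

variable {V : Type*} {G : SimpleGraph V}

lemma exists_firstEdge {a b : V} (w : G.Walk a b) (hab : a ≠ b) :
    ∃ x, G.Adj a x ∧ s(a, x) ∈ w.edges := by
  cases w with
  | nil => exact absurd rfl hab
  | cons h p => exact ⟨_, h, by simp⟩

lemma bddAbove_immSet (V : Type*) [Fintype V] (G : SimpleGraph V) :
    BddAbove {t | HasCliqueImmersion G t} := by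
  refine ⟨Fintype.card V, fun s hs => ?_⟩
  obtain ⟨φ, hφ, -⟩ := hs
  simpa using Fintype.card_le_of_injective φ hφ

lemma zero_mem (G : SimpleGraph V) : HasCliqueImmersion G 0 :=
  ⟨Fin.elim0, fun a => a.elim0, fun i => i.elim0, fun i => i.elim0, fun i => i.elim0⟩

lemma one_mem (G : SimpleGraph V) (v : V) : HasCliqueImmersion G 1 :=
  ⟨fun _ => v, fun a b _ => Subsingleton.elim a b, fun _ _ => Walk.nil,
    fun i j h => absurd h (by omega), fun i j k l h => absurd h (by omega)⟩

lemma two_mem {x y : V} (hxy : G.Adj x y) : HasCliqueImmersion G 2 := by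
  refine ⟨![x, y], ?_, fun i j =>
    match i, j with
    | ⟨0, _⟩, ⟨0, _⟩ => Walk.nil
    | ⟨0, _⟩, ⟨1, _⟩ => hxy.toWalk
    | ⟨1, _⟩, ⟨0, _⟩ => hxy.symm.toWalk
    | ⟨1, _⟩, ⟨1, _⟩ => Walk.nil, ?_, ?_⟩
  · intro a b hab
    fin_cases a <;> fin_cases b <;> simp_all [hxy.ne, hxy.ne']
  · intro i j h
    fin_cases i <;> fin_cases j <;> simp_all [Walk.isPath_def, hxy.ne]
  · intro i j k l hij hkl hne
    fin_cases i <;> fin_cases j <;> fin_cases k <;> fin_cases l <;> simp_all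

end ImmersionAux
namespace ImmersionAux2

open SimpleGraph Walk

variable {V : Type*} {G : SimpleGraph V}

/-- In the surjective case, every pair of distinct vertices is adjacent. -/
lemma adj_of_surj [Fintype V] {t : ℕ}
    (φ : Fin t → V) (hφ : Function.Injective φ) (hsurj : Function.Surjective φ)
    (P : ∀ i j : Fin t, G.Walk (φ i) (φ j))
    (hpath : ∀ i j : Fin t, i < j → (P i j).IsPath)
    (hdisj : ∀ i j k l : Fin t, i < j → k < l → (i, j) ≠ (k, l) →
      List.Disjoint (P i j).edges (P k l).edges)
    {x y : V} (hxy : x ≠ y) : G.Adj x y := by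
  classical
  by_contra hadj
  obtain ⟨i, rfl⟩ := hsurj x
  obtain ⟨j₀, rfl⟩ := hsurj y
  have hij₀ : j₀ ≠ i := fun h => hxy (by rw [h])
  -- for each j ≠ i there is a neighbor of φ i reached by the first edge of the (i,j)-walk
  have hW : ∀ j : Fin t, j ≠ i → ∃ x, G.Adj (φ i) x ∧
      ∃ a b : Fin t, a < b ∧ ((a = i ∧ b = j) ∨ (a = j ∧ b = i)) ∧
        s(φ i, x) ∈ (P a b).edges := by
    intro j hj
    rcases lt_or_gt_of_ne hj with h | h
    · obtain ⟨x, hx1, hx2⟩ := ImmersionAux.exists_firstEdge (P j i).reverse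
        (fun h' => hj (hφ h').symm)
      exact ⟨x, hx1, j, i, h, Or.inr ⟨rfl, rfl⟩, by
        simpa [Walk.edges_reverse] using hx2⟩
    · obtain ⟨x, hx1, hx2⟩ := ImmersionAux.exists_firstEdge (P i j)
        (fun h' => hj (hφ h').symm)
      exact ⟨x, hx1, i, j, h, Or.inl ⟨rfl, rfl⟩, hx2⟩
  let g : {j : Fin t // j ≠ i} → {z : V // z ≠ φ i ∧ z ≠ φ j₀} := fun j =>
    ⟨(hW j.1 j.2).choose, (hW j.1 j.2).choose_spec.1.ne',
      fun h => hadj (h ▸ (hW j.1 j.2).choose_spec.1)⟩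
  have hginj : Function.Injective g := by
    intro j j' h
    simp only [g, Subtype.mk.injEq] at h
    by_contra hjj'
    obtain ⟨hadj1, a, b, hab, hcase, hmem⟩ := (hW j.1 j.2).choose_spec
    obtain ⟨hadj1', a', b', hab', hcase', hmem'⟩ := (hW j'.1 j'.2).choose_spec
    rw [h] at hmem
    have hpairs : (a, b) ≠ (a', b') := by
      rintro heq
      injection heq with h1 h2
      rcases hcase with ⟨ha, hb⟩ | ⟨ha, hb⟩ <;> rcases hcase' with ⟨ha', hb'⟩ | ⟨ha', hb'⟩
      · exact hjj' (Subtype.ext (hb.symm.trans (h2.trans hb')))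
      · exact j.2 (hb.symm.trans (h2.trans hb'))
      · exact j.2 (ha.symm.trans (h1.trans ha'))
      · exact hjj' (Subtype.ext (ha.symm.trans (h1.trans ha')))
    exact hdisj a b a' b' hab hab' hpairs hmem hmem'
  have hcard1 : Fintype.card {j : Fin t // j ≠ i} = t - 1 := by
    simp [Fintype.card_subtype_compl]
  have hcard2 : Fintype.card {z : V // z ≠ φ i ∧ z ≠ φ j₀} = t - 2 := by
    have hVt : Fintype.card V = t := by
      rw [← Fintype.card_fin t]
      exact (Fintype.card_of_bijective ⟨hφ, hsurj⟩).symm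
    rw [Fintype.card_subtype]
    have : Finset.univ.filter (fun z : V => z ≠ φ i ∧ z ≠ φ j₀)
        = Finset.univ \ {φ i, φ j₀} := by
      ext z; simp [and_comm]
    rw [this, Finset.card_sdiff_of_subset (by simp), Finset.card_pair hxy]
    simp [hVt]
  have := Fintype.card_le_of_injective g hginj
  rw [hcard1, hcard2] at this
  have ht1 : 1 ≤ t := by
    rcases Nat.eq_zero_or_pos t with rfl | h
    · exact i.elim0
    · exact h
  omega

end ImmersionAux2
namespace ImmersionAux3

open SimpleGraph Walk

variable {V : Type*} {G : SimpleGraph V} {n t : ℕ}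

/-- Embedding of `G` into layer `k` of the box product with a path. -/
@[reducible]
def eHom (G : SimpleGraph V) (n : ℕ) (k : Fin n) : G →g G.boxProd (pathGraph n) where
  toFun v := (v, k)
  map_rel' h := Or.inl ⟨h, rfl⟩

lemma eHom_apply (k : Fin n) (v : V) : eHom G n k v = (v, k) := rfl

lemma eHom_coe (k : Fin n) : ⇑(eHom G n k) = fun v => (v, k) := rfl

lemma eHom_inj (k : Fin n) : Function.Injective (eHom G n k) :=
  fun a b h => congrArg Prod.fst h

/-- Vertical adjacency in a box product with a path graph. -/
lemma vAdj (v : V) (a b : Fin n) (h : (a : ℕ) + 1 = b ∨ (b : ℕ) + 1 = a) :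
    (G.boxProd (pathGraph n)).Adj (v, a) (v, b) :=
  Or.inr ⟨pathGraph_adj.mpr h, rfl⟩

lemma hor_hor {k k' : Fin n} {e e' : Sym2 V}
    (h : Sym2.map (fun v => (v, k)) e = Sym2.map (fun v => (v, k')) e') :
    k = k' ∧ e = e' := by
  induction e using Sym2.ind with | _ x y =>
  induction e' using Sym2.ind with | _ z w =>
  simp only [Sym2.map_pair_eq, Sym2.eq_iff, Prod.mk.injEq] at h
  obtain ⟨⟨h1, h2⟩, h3, h4⟩ | ⟨⟨h1, h2⟩, h3, h4⟩ := h
  · exact ⟨h2, by rw [h1, h3]⟩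
  · refine ⟨h2, ?_⟩
    rw [h1, h3]
    exact Sym2.eq_swap

lemma hor_vert {k a b : Fin n} {v w : V} {e : Sym2 V} (hab : a ≠ b)
    (h : Sym2.map (fun x => (x, k)) e = s((v, a), (w, b))) : False := by
  induction e using Sym2.ind with | _ x y =>
  simp only [Sym2.map_pair_eq, Sym2.eq_iff, Prod.mk.injEq] at h
  obtain ⟨⟨-, h2⟩, -, h4⟩ | ⟨⟨-, h2⟩, -, h4⟩ := h <;> exact hab (h2 ▸ h4 ▸ rfl)

/-- The terminal map for the `K_{t+2}`-immersion in `G □ P_n`. -/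
def tmap (ht : 2 ≤ t) (hn : 5 ≤ n) (φ : Fin t → V) (i : Fin (t + 2)) : V × Fin n :=
  if h : (i : ℕ) < t then (φ ⟨i, h⟩, ⟨2, by omega⟩)
  else if (i : ℕ) = t then (φ ⟨0, by omega⟩, ⟨1, by omega⟩)
  else (φ ⟨0, by omega⟩, ⟨3, by omega⟩)

variable {ht : 2 ≤ t} {hn : 5 ≤ n} {φ : Fin t → V}

lemma tmap_lt {i : Fin (t + 2)} (h : (i : ℕ) < t) :
    tmap ht hn φ i = (φ ⟨i, h⟩, ⟨2, by omega⟩) := dif_pos h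

lemma tmap_eqt {i : Fin (t + 2)} (h : (i : ℕ) = t) :
    tmap ht hn φ i = (φ ⟨0, by omega⟩, ⟨1, by omega⟩) := by
  unfold tmap
  rw [dif_neg (by omega), if_pos h]

lemma tmap_gtt {i : Fin (t + 2)} (h : t < (i : ℕ)) :
    tmap ht hn φ i = (φ ⟨0, by omega⟩, ⟨3, by omega⟩) := by
  unfold tmap
  rw [dif_neg (by omega), if_neg (by omega)]

lemma tmap_inj (ht : 2 ≤ t) (hn : 5 ≤ n) {φ : Fin t → V} (hφ : Function.Injective φ) :
    Function.Injective (tmap (V := V) ht hn φ) := by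
  intro i j h
  have hi2 := i.isLt
  have hj2 := j.isLt
  by_cases hi : (i : ℕ) < t <;> by_cases hj : (j : ℕ) < t
  · rw [tmap_lt hi, tmap_lt hj, Prod.mk.injEq] at h
    have := hφ h.1
    exact Fin.ext (by simpa [Fin.ext_iff] using this)
  · exfalso
    rcases eq_or_lt_of_le (not_lt.mp hj) with hj' | hj'
    · rw [tmap_lt hi, tmap_eqt hj'.symm, Prod.mk.injEq, Fin.mk.injEq] at h
      omega
    · rw [tmap_lt hi, tmap_gtt hj', Prod.mk.injEq, Fin.mk.injEq] at h
      omega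
  · exfalso
    rcases eq_or_lt_of_le (not_lt.mp hi) with hi' | hi'
    · rw [tmap_lt hj, tmap_eqt hi'.symm, Prod.mk.injEq, Fin.mk.injEq] at h
      omega
    · rw [tmap_lt hj, tmap_gtt hi', Prod.mk.injEq, Fin.mk.injEq] at h
      omega
  · rcases eq_or_lt_of_le (not_lt.mp hi) with hi' | hi' <;>
      rcases eq_or_lt_of_le (not_lt.mp hj) with hj' | hj'
    · exact Fin.ext (hi'.symm.trans hj')
    · rw [tmap_eqt hi'.symm, tmap_gtt hj', Prod.mk.injEq, Fin.mk.injEq] at h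
      omega
    · rw [tmap_gtt hi', tmap_eqt hj'.symm, Prod.mk.injEq, Fin.mk.injEq] at h
      omega
    · exact Fin.ext (by omega)

end ImmersionAux3
namespace ImmersionAux3

open SimpleGraph Walk

variable {V : Type*} {G : SimpleGraph V} {n t : ℕ}

/-- The walk family for the `K_{t+2}`-immersion in `G □ P_n`. -/
noncomputable def bWalk (ht : 2 ≤ t) (hn : 5 ≤ n) (φ : Fin t → V)
    (P : ∀ i j : Fin t, G.Walk (φ i) (φ j)) (u : V)
    (Q : G.Walk (φ ⟨0, by omega⟩) u)
    (hc : (G.boxProd (pathGraph n)).Connected)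
    (i j : Fin (t + 2)) :
    (G.boxProd (pathGraph n)).Walk (tmap ht hn φ i) (tmap ht hn φ j) :=
  if hij : (i : ℕ) < (j : ℕ) then
    if hj : (j : ℕ) < t then
      ((P ⟨i, by omega⟩ ⟨j, hj⟩).map (eHom G n ⟨2, by omega⟩)).copy
        (tmap_lt (by omega)).symm (tmap_lt hj).symm
    else if hjt : (j : ℕ) = t then
      if hi0 : (i : ℕ) = 0 then
        ((Walk.cons (vAdj (φ ⟨i, by omega⟩) ⟨2, by omega⟩ ⟨1, by omega⟩ (Or.inr rfl))
            Walk.nil).copy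
          (tmap_lt (by omega)).symm
          (by rw [tmap_eqt hjt, show (⟨0, by omega⟩ : Fin t) = ⟨i, by omega⟩ from
              Fin.mk_eq_mk.mpr (by omega)]))
      else
        ((Walk.cons (vAdj (φ ⟨i, by omega⟩) ⟨2, by omega⟩ ⟨1, by omega⟩ (Or.inr rfl))
            ((P ⟨0, by omega⟩ ⟨i, by omega⟩).map (eHom G n ⟨1, by omega⟩)).reverse).copy
          (tmap_lt (by omega)).symm (tmap_eqt hjt).symm)
    else
      if hit : (i : ℕ) < t then
        if hi0 : (i : ℕ) = 0 then
          ((Walk.cons (vAdj (φ ⟨i, hit⟩) ⟨2, by omega⟩ ⟨3, by omega⟩ (Or.inl rfl))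
              Walk.nil).copy
            (tmap_lt hit).symm
            (by rw [tmap_gtt (show t < (j : ℕ) by omega),
                show (⟨0, by omega⟩ : Fin t) = ⟨i, by omega⟩ from Fin.mk_eq_mk.mpr (by omega)]))
        else
          ((Walk.cons (vAdj (φ ⟨i, hit⟩) ⟨2, by omega⟩ ⟨3, by omega⟩ (Or.inl rfl))
              ((P ⟨0, by omega⟩ ⟨i, hit⟩).map (eHom G n ⟨3, by omega⟩)).reverse).copy
            (tmap_lt hit).symm (tmap_gtt (by omega)).symm)
      else
        ((Walk.cons (vAdj (φ ⟨0, by omega⟩) ⟨1, by omega⟩ ⟨0, by omega⟩ (Or.inr rfl))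
            ((Q.map (eHom G n ⟨0, by omega⟩)).append
              (Walk.cons (vAdj u ⟨0, by omega⟩ ⟨1, by omega⟩ (Or.inl rfl))
                (Walk.cons (vAdj u ⟨1, by omega⟩ ⟨2, by omega⟩ (Or.inl rfl))
                  (Walk.cons (vAdj u ⟨2, by omega⟩ ⟨3, by omega⟩ (Or.inl rfl))
                    (Walk.cons (vAdj u ⟨3, by omega⟩ ⟨4, by omega⟩ (Or.inl rfl))
                      ((Q.reverse.map (eHom G n ⟨4, by omega⟩)).append
                        (Walk.cons
                          (vAdj (φ ⟨0, by omega⟩) ⟨4, by omega⟩ ⟨3, by omega⟩ (Or.inr rfl))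
                          Walk.nil)))))))).copy
          (tmap_eqt (by omega)).symm (tmap_gtt (by omega)).symm)
  else Nonempty.some (hc.preconnected _ _)

end ImmersionAux3
namespace ImmersionAux3

open SimpleGraph Walk

variable {V : Type*} {G : SimpleGraph V} {n t : ℕ}

lemma bWalk_isPath (ht : 2 ≤ t) (hn : 5 ≤ n) (φ : Fin t → V)
    (hφ : Function.Injective φ)
    (P : ∀ i j : Fin t, G.Walk (φ i) (φ j))
    (hpath : ∀ i j : Fin t, i < j → (P i j).IsPath)
    (u : V) (hu : ∀ i, φ i ≠ u)
    (Q : G.Walk (φ ⟨0, by omega⟩) u) (hQ : Q.IsPath)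
    (hc : (G.boxProd (pathGraph n)).Connected)
    (i j : Fin (t + 2)) (hij : i < j) :
    (bWalk ht hn φ P u Q hc i j).IsPath := by
  have hij' : (i : ℕ) < (j : ℕ) := hij
  have hj2 := j.isLt
  rw [bWalk, dif_pos hij']
  by_cases hj : (j : ℕ) < t
  · rw [dif_pos hj]; refine (Walk.isPath_copy _ _ _).mpr ?_
    exact Walk.map_isPath_of_injective (eHom_inj _) (hpath _ _ (Fin.mk_lt_mk.mpr (by omega)))
  · rw [dif_neg hj]
    by_cases hjt : (j : ℕ) = t
    · rw [dif_pos hjt]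
      by_cases hi0 : (i : ℕ) = 0
      · rw [dif_pos hi0, Walk.isPath_copy]
        simp [Walk.isPath_def, Prod.ext_iff, Fin.ext_iff]
      · rw [dif_neg hi0]; refine (Walk.isPath_copy _ _ _).mpr ((Walk.cons_isPath_iff _ _).mpr ?_)
        refine ⟨(Walk.map_isPath_of_injective (eHom_inj _)
          (hpath _ _ (Fin.mk_lt_mk.mpr (by omega)))).reverse, ?_⟩
        simp [Walk.support_reverse, Walk.support_map, eHom_apply, Prod.ext_iff, Fin.ext_iff]
    · rw [dif_neg hjt]
      by_cases hit : (i : ℕ) < t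
      · rw [dif_pos hit]
        by_cases hi0 : (i : ℕ) = 0
        · rw [dif_pos hi0, Walk.isPath_copy]
          simp [Walk.isPath_def, Prod.ext_iff, Fin.ext_iff]
        · rw [dif_neg hi0]; refine (Walk.isPath_copy _ _ _).mpr ((Walk.cons_isPath_iff _ _).mpr ?_)
          refine ⟨(Walk.map_isPath_of_injective (eHom_inj _)
            (hpath _ _ (Fin.mk_lt_mk.mpr (by omega)))).reverse, ?_⟩
          simp [Walk.support_reverse, Walk.support_map, eHom_apply, Prod.ext_iff, Fin.ext_iff]
      · rw [dif_neg hit, Walk.isPath_copy, Walk.isPath_def]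
        have hQn : Q.support.Nodup := hQ.support_nodup
        have hfu : φ ⟨0, by omega⟩ ≠ u := hu _
        have hA : ∀ k : Fin n, (Q.support.map (fun v => (v, k))).Nodup :=
          fun k => hQn.map (fun a b h => congrArg Prod.fst h)
        simp only [Walk.support_cons, Walk.support_append, Walk.support_map,
          Walk.support_reverse, Walk.support_nil, eHom_coe, List.tail_cons]
        simp only [List.nodup_cons, List.nodup_append, List.mem_append, List.mem_cons,
          List.mem_map, List.mem_reverse, List.mem_singleton, List.nodup_reverse,
          List.nodup_singleton, List.disjoint_singleton, List.singleton_disjoint,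
          List.disjoint_cons_right, List.disjoint_cons_left]
        have hA4 : (List.map (fun v => (v, (⟨4, by omega⟩ : Fin n))) Q.support.reverse).Nodup :=
          (List.nodup_reverse.mpr hQn).map (fun a b h => congrArg Prod.fst h)
        simp [List.Disjoint, Prod.ext_iff, Fin.ext_iff, hfu, Ne.symm hfu, hA, hA4]
        exact ⟨fun a b _ hb a' b' _ hb' _ => by omega, fun a b _ hb a' b' h _ => by
          rcases h with ⟨-, h⟩ | ⟨-, h⟩ | ⟨-, h⟩ | ⟨-, h⟩ | ⟨-, h⟩ <;> omega⟩


end ImmersionAux3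
namespace ImmersionAux3

open SimpleGraph Walk

variable {V : Type*} {G : SimpleGraph V} {n t : ℕ}

lemma bWalk_edges_cases (ht : 2 ≤ t) (hn : 5 ≤ n) (φ : Fin t → V)
    (P : ∀ i j : Fin t, G.Walk (φ i) (φ j)) (u : V)
    (Q : G.Walk (φ ⟨0, by omega⟩) u)
    (hc : (G.boxProd (pathGraph n)).Connected)
    {i j : Fin (t + 2)} (hij : (i : ℕ) < (j : ℕ)) {e : Sym2 (V × Fin n)}
    (he : e ∈ (bWalk ht hn φ P u Q hc i j).edges) :
    (∃ (hi : (i : ℕ) < t) (hj : (j : ℕ) < t), ∃ e₀ ∈ (P ⟨i, hi⟩ ⟨j, hj⟩).edges,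
        e = Sym2.map (fun v => (v, (⟨2, by omega⟩ : Fin n))) e₀)
    ∨ (∃ (hi : (i : ℕ) < t), (j : ℕ) = t ∧
        (e = s((φ ⟨i, hi⟩, (⟨2, by omega⟩ : Fin n)), (φ ⟨i, hi⟩, ⟨1, by omega⟩))
          ∨ ∃ (_ : 0 < (i : ℕ)), ∃ e₀ ∈ (P ⟨0, by omega⟩ ⟨i, hi⟩).edges,
              e = Sym2.map (fun v => (v, (⟨1, by omega⟩ : Fin n))) e₀))
    ∨ (∃ (hi : (i : ℕ) < t), (j : ℕ) = t + 1 ∧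
        (e = s((φ ⟨i, hi⟩, (⟨2, by omega⟩ : Fin n)), (φ ⟨i, hi⟩, ⟨3, by omega⟩))
          ∨ ∃ (_ : 0 < (i : ℕ)), ∃ e₀ ∈ (P ⟨0, by omega⟩ ⟨i, hi⟩).edges,
              e = Sym2.map (fun v => (v, (⟨3, by omega⟩ : Fin n))) e₀))
    ∨ ((i : ℕ) = t ∧ (j : ℕ) = t + 1 ∧
        (e = s((φ ⟨0, by omega⟩, (⟨1, by omega⟩ : Fin n)), (φ ⟨0, by omega⟩, ⟨0, by omega⟩))
          ∨ (∃ e₀ ∈ Q.edges, e = Sym2.map (fun v => (v, (⟨0, by omega⟩ : Fin n))) e₀)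
          ∨ e = s((u, (⟨0, by omega⟩ : Fin n)), (u, ⟨1, by omega⟩))
          ∨ e = s((u, (⟨1, by omega⟩ : Fin n)), (u, ⟨2, by omega⟩))
          ∨ e = s((u, (⟨2, by omega⟩ : Fin n)), (u, ⟨3, by omega⟩))
          ∨ e = s((u, (⟨3, by omega⟩ : Fin n)), (u, ⟨4, by omega⟩))
          ∨ (∃ e₀ ∈ Q.edges, e = Sym2.map (fun v => (v, (⟨4, by omega⟩ : Fin n))) e₀)
          ∨ e = s((φ ⟨0, by omega⟩, (⟨4, by omega⟩ : Fin n)), (φ ⟨0, by omega⟩, ⟨3, by omega⟩)))) := by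
  have hj2 := j.isLt
  rw [bWalk, dif_pos hij] at he
  by_cases hj : (j : ℕ) < t
  · rw [dif_pos hj] at he
    simp only [Walk.edges_copy, Walk.edges_map, List.mem_map, eHom_coe] at he
    obtain ⟨e₀, hm, rfl⟩ := he
    exact Or.inl ⟨by omega, hj, e₀, hm, rfl⟩
  · rw [dif_neg hj] at he
    by_cases hjt : (j : ℕ) = t
    · rw [dif_pos hjt] at he
      refine Or.inr (Or.inl ⟨by omega, hjt, ?_⟩)
      by_cases hi0 : (i : ℕ) = 0
      · rw [dif_pos hi0] at he
        simp only [Walk.edges_copy, Walk.edges_cons, Walk.edges_nil, List.mem_cons,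
          List.not_mem_nil, or_false, List.mem_singleton] at he
        exact Or.inl he
      · rw [dif_neg hi0] at he
        simp only [Walk.edges_copy, Walk.edges_cons, Walk.edges_reverse, Walk.edges_map,
          List.mem_cons, List.mem_reverse, List.mem_map, eHom_coe] at he
        rcases he with rfl | ⟨e₀, hm, rfl⟩
        · exact Or.inl rfl
        · exact Or.inr ⟨by omega, e₀, hm, rfl⟩
    · rw [dif_neg hjt] at he
      by_cases hit : (i : ℕ) < t
      · rw [dif_pos hit] at he
        refine Or.inr (Or.inr (Or.inl ⟨hit, by omega, ?_⟩))
        by_cases hi0 : (i : ℕ) = 0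
        · rw [dif_pos hi0] at he
          simp only [Walk.edges_copy, Walk.edges_cons, Walk.edges_nil, List.mem_cons,
            List.not_mem_nil, or_false, List.mem_singleton] at he
          exact Or.inl he
        · rw [dif_neg hi0] at he
          simp only [Walk.edges_copy, Walk.edges_cons, Walk.edges_reverse, Walk.edges_map,
            List.mem_cons, List.mem_reverse, List.mem_map, eHom_coe] at he
          rcases he with rfl | ⟨e₀, hm, rfl⟩
          · exact Or.inl rfl
          · exact Or.inr ⟨by omega, e₀, hm, rfl⟩
      · rw [dif_neg hit] at he
        refine Or.inr (Or.inr (Or.inr ⟨by omega, by omega, ?_⟩))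
        simp only [Walk.edges_copy, Walk.edges_cons, Walk.edges_append, Walk.edges_reverse,
          Walk.edges_map, Walk.edges_nil, List.mem_cons, List.mem_append, List.mem_reverse,
          List.mem_map, List.not_mem_nil, or_false, eHom_coe] at he
        rcases he with rfl | ⟨e₀, hm, rfl⟩ | rfl | rfl | rfl | rfl | ⟨e₀, hm, rfl⟩ | rfl
        · exact Or.inl rfl
        · exact Or.inr (Or.inl ⟨e₀, hm, rfl⟩)
        · exact Or.inr (Or.inr (Or.inl rfl))
        · exact Or.inr (Or.inr (Or.inr (Or.inl rfl)))
        · exact Or.inr (Or.inr (Or.inr (Or.inr (Or.inl rfl))))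
        · exact Or.inr (Or.inr (Or.inr (Or.inr (Or.inr (Or.inl rfl)))))
        · exact Or.inr (Or.inr (Or.inr (Or.inr (Or.inr (Or.inr (Or.inl ⟨e₀, hm, rfl⟩))))))
        · exact Or.inr (Or.inr (Or.inr (Or.inr (Or.inr (Or.inr (Or.inr rfl))))))

end ImmersionAux3
namespace ImmersionAux3

open SimpleGraph Walk

variable {V : Type*} {G : SimpleGraph V} {n t : ℕ}

lemma fin_mk_ne {m a b : ℕ} {ha : a < m} {hb : b < m} (h : a ≠ b) :
    (⟨a, ha⟩ : Fin m) ≠ ⟨b, hb⟩ := fun hh => h (congrArg Fin.val hh)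

set_option maxHeartbeats 2000000 in
lemma bWalk_disjoint (ht : 2 ≤ t) (hn : 5 ≤ n) (φ : Fin t → V)
    (hφ : Function.Injective φ)
    (P : ∀ i j : Fin t, G.Walk (φ i) (φ j))
    (hdisj : ∀ i j k l : Fin t, i < j → k < l → (i, j) ≠ (k, l) →
      List.Disjoint (P i j).edges (P k l).edges)
    (u : V) (hu : ∀ i, φ i ≠ u)
    (Q : G.Walk (φ ⟨0, by omega⟩) u)
    (hc : (G.boxProd (pathGraph n)).Connected)
    (i j k l : Fin (t + 2)) (hij : i < j) (hkl : k < l) (hne : (i, j) ≠ (k, l)) :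
    List.Disjoint (bWalk ht hn φ P u Q hc i j).edges (bWalk ht hn φ P u Q hc k l).edges := by
  intro e he1 he2
  have hij' : (i : ℕ) < (j : ℕ) := hij
  have hkl' : (k : ℕ) < (l : ℕ) := hkl
  have hnev : ¬((i : ℕ) = (k : ℕ) ∧ (j : ℕ) = (l : ℕ)) := fun ⟨h1, h2⟩ =>
    hne (by rw [Prod.mk.injEq]; exact ⟨Fin.ext h1, Fin.ext h2⟩)
  have c1 := bWalk_edges_cases ht hn φ P u Q hc hij' he1
  have c2 := bWalk_edges_cases ht hn φ P u Q hc hkl' he2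
  rcases c1 with ⟨hi, hjx, e₀, hm, rfl⟩ |
    ⟨hi, hjx, rfl | ⟨hi0, e₀, hm, rfl⟩⟩ |
    ⟨hi, hjx, rfl | ⟨hi0, e₀, hm, rfl⟩⟩ |
    ⟨hix, hjx, rfl | ⟨e₀, hm, rfl⟩ | rfl | rfl | rfl | rfl | ⟨e₀, hm, rfl⟩ | rfl⟩ <;>
  rcases c2 with ⟨hk, hlx, e₁, hm', heq⟩ |
    ⟨hk, hlx, heq | ⟨hk0, e₁, hm', heq⟩⟩ |
    ⟨hk, hlx, heq | ⟨hk0, e₁, hm', heq⟩⟩ |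
    ⟨hkx, hlx, heq | ⟨e₁, hm', heq⟩ | heq | heq | heq | heq | ⟨e₁, hm', heq⟩ | heq⟩ <;>
  first
    | exact hnev ⟨by omega, by omega⟩
    | exact hor_vert (fin_mk_ne (by omega)) heq
    | exact hor_vert (fin_mk_ne (by omega)) heq.symm
    | (obtain ⟨hbad, -⟩ := hor_hor heq; exact fin_mk_ne (by omega) hbad)
    | (obtain ⟨-, rfl⟩ := hor_hor heq;
       exact hdisj _ _ _ _ (Fin.mk_lt_mk.mpr (by omega)) (Fin.mk_lt_mk.mpr (by omega))
         (fun hp => hnev (by rw [Prod.mk.injEq, Fin.mk.injEq, Fin.mk.injEq] at hp; omega))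
         hm hm')
    | (simp only [Sym2.eq_iff, Prod.mk.injEq, Fin.mk.injEq] at heq;
       rcases heq with ⟨⟨hv1, ha1⟩, hv2, ha2⟩ | ⟨⟨hv1, ha1⟩, hv2, ha2⟩ <;>
         first
           | omega
           | exact hu _ hv1
           | exact hu _ hv2
           | exact hu _ hv1.symm
           | exact hu _ hv2.symm
           | exact hnev ⟨by simpa [Fin.mk.injEq] using hφ hv1, by omega⟩)

end ImmersionAux3
theorem immersion_boxProd_path_ge {V : Type*} [Fintype V] (G : SimpleGraph V) (t : ℕ)
    (hconn : G.Connected) (him : immersionNumber G = t)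
    (hne : IsEmpty (G ≃g (⊤ : SimpleGraph (Fin t))))
    (n : ℕ) (hn : 5 ≤ n) :
    t + 2 ≤ immersionNumber (G.boxProd (SimpleGraph.pathGraph n)) := by
  classical
  have hbG := ImmersionAux.bddAbove_immSet V G
  have hnonG : {s | HasCliqueImmersion G s}.Nonempty := ⟨0, ImmersionAux.zero_mem G⟩
  have hmem : HasCliqueImmersion G t := him ▸ Nat.sSup_mem hnonG hbG
  obtain ⟨φ, hφ, P, hpath, hdisj⟩ := hmem
  by_cases hsurj : Function.Surjective φ
  · exfalso
    have hadj : ∀ x y : V, x ≠ y → G.Adj x y := fun x y h =>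
      ImmersionAux2.adj_of_surj φ hφ hsurj P hpath hdisj h
    refine hne.false
      { toEquiv := (Equiv.ofBijective φ ⟨hφ, hsurj⟩).symm,
        map_rel_iff' := @fun a b => ?_ }
    simp only [SimpleGraph.top_adj, ne_eq, EmbeddingLike.apply_eq_iff_eq]
    exact ⟨fun h => hadj a b h, fun h => h.ne⟩
  · rw [Function.Surjective] at hsurj
    push_neg at hsurj
    obtain ⟨u, hu⟩ := hsurj
    rcases Nat.lt_or_ge t 2 with h2 | h2
    · exfalso
      have hv : Nonempty V := hconn.nonempty
      rcases Nat.lt_or_ge t 1 with h1 | h1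
      · have : 1 ≤ immersionNumber G := le_csSup hbG (ImmersionAux.one_mem G hv.some)
        omega
      · have h1' : t = 1 := by omega
        subst h1'
        have hne0 : φ ⟨0, by omega⟩ ≠ u := hu _
        have hw := (hconn.preconnected (φ ⟨0, by omega⟩) u).some
        obtain ⟨x, hx, -⟩ := ImmersionAux.exists_firstEdge hw hne0
        have : 2 ≤ immersionNumber G := le_csSup hbG (ImmersionAux.two_mem hx)
        omega
    · have hPc : (SimpleGraph.pathGraph n).Connected := by
        have hnn : n = (n - 1) + 1 := by omega
        rw [hnn]
        exact SimpleGraph.pathGraph_connected _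
      have hBc := hconn.boxProd hPc
      have hq := (hconn.preconnected (φ ⟨0, by omega⟩) u).some.toPath
      refine le_csSup (ImmersionAux.bddAbove_immSet _ _) ?_
      exact ⟨ImmersionAux3.tmap h2 hn φ,
        ImmersionAux3.tmap_inj h2 hn hφ,
        ImmersionAux3.bWalk h2 hn φ P u hq.1 hBc,
        fun i j hij => ImmersionAux3.bWalk_isPath h2 hn φ hφ P hpath u
          (fun i => hu i) hq.1 hq.2 hBc i j hij,
        fun i j k l hij hkl hnep => ImmersionAux3.bWalk_disjoint h2 hn φ hφ P hdisj u
          (fun i => hu i) hq.1 hBc i j k l hij hkl hnep⟩
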